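/- Let G be a triangle-free normal plane map. Then G contains a path v1v2v3 with deg(v2)=3 and deg(v1) ≤ 5, deg(v3) ≤ 6, or a path v1v2v3 with deg(v2) ≤ 4 and deg(v1) = deg(v3) = 3. -/

import Mathlib

open SimpleGraph

/-- A combinatorial (oriented, 2-cell) embedding of a simple graph, given by a
rotation-style successor permutation on darts whose cycles are exactly the sets
of darts leaving a common vertex.  Faces are the cycles of the permutation
`d ↦ next d.symm`. -/
structure PlaneEmbedding {V : Type} (G : SimpleGraph V) where
  next : Equiv.Perm G.Dart
  next_fst : ∀ d : G.Dart, (next d).fst = d.fst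
  cycle_of_fst : ∀ d d' : G.Dart, d.fst = d'.fst → next.SameCycle d d'

namespace PlaneEmbedding

variable {V : Type} {G : SimpleGraph V} (E : PlaneEmbedding G)

/-- The face permutation on darts. -/
def facePerm : Equiv.Perm G.Dart :=
  (Function.Involutive.toPerm Dart.symm fun d => Dart.symm_symm d).trans E.next

/-- The setoid on darts identifying darts lying on the same face. -/
def faceSetoid : Setoid G.Dart :=
  ⟨E.facePerm.SameCycle, ⟨fun _ => Equiv.Perm.SameCycle.refl _ _,
    Equiv.Perm.SameCycle.symm, Equiv.Perm.SameCycle.trans⟩⟩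

/-- The number of faces of the embedding. -/
noncomputable def faceCount : ℕ := Nat.card (Quotient E.faceSetoid)

/-- The size (degree) of the face containing the dart `d`. -/
noncomputable def faceSize (d : G.Dart) : ℕ :=
  Nat.card {d' : G.Dart // E.facePerm.SameCycle d d'}

/-- Euler's formula `|V| - |E| + |F| = 2`: the embedding is in the plane. -/
def EulerFormula : Prop :=
  (Nat.card V : ℤ) - Nat.card G.edgeSet + E.faceCount = 2

end PlaneEmbedding

set_option linter.unusedSectionVars false

section Stmt16Aux

open Finset PlaneEmbedding

variable {V : Type} [Fintype V] [DecidableEq V] {G : SimpleGraph V} [DecidableRel G.Adj]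
  (E : PlaneEmbedding G)

lemma facePerm_apply (d : G.Dart) : E.facePerm d = E.next d.symm := rfl

@[simp] lemma facePerm_fst (d : G.Dart) : (E.facePerm d).fst = d.snd :=
  E.next_fst d.symm

/-- `next` has no fixed points when the minimum degree is at least 2. -/
lemma next_ne (hδ : ∀ v, 3 ≤ G.degree v) (d : G.Dart) : E.next d ≠ d := by
  intro hfix
  have hc : 1 < (G.neighborFinset d.fst).card := by
    rw [card_neighborFinset_eq_degree]; have := hδ d.fst; omega
  obtain ⟨w, hw, hwne⟩ := Finset.exists_mem_ne hc d.snd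
  rw [mem_neighborFinset] at hw
  have hsc := E.cycle_of_fst d ⟨(d.fst, w), hw⟩ rfl
  obtain ⟨n, hn⟩ := hsc
  have hz : ∀ m : ℤ, (E.next ^ m) d = d := fun m =>
    Equiv.Perm.zpow_apply_eq_self_of_apply_eq_self hfix m
  rw [hz n] at hn
  exact hwne (congrArg (·.snd) hn.symm)

lemma faceSize_congr {d d' : G.Dart} (h : E.facePerm.SameCycle d d') :
    E.faceSize d = E.faceSize d' := by
  unfold PlaneEmbedding.faceSize
  exact Nat.card_congr (Equiv.subtypeEquivRight fun x =>
    ⟨fun hx => h.symm.trans hx, fun hx => h.trans hx⟩)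

lemma faceSize_eq_card_support (d : G.Dart) (hfix : E.facePerm d ≠ d) :
    E.faceSize d = (E.facePerm.cycleOf d).support.card := by
  unfold PlaneEmbedding.faceSize
  rw [Nat.card_eq_fintype_card, Fintype.card_subtype]
  congr 1
  ext x
  simp only [Finset.mem_filter, Finset.mem_univ, true_and,
    Equiv.Perm.mem_support_cycleOf_iff]
  exact ⟨fun h => ⟨h, Equiv.Perm.mem_support.mpr hfix⟩, fun h => h.1⟩

lemma facePerm_ne (d : G.Dart) (hface : 3 ≤ E.faceSize d) : E.facePerm d ≠ d := by
  intro hfix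
  have h1 : E.faceSize d = 1 := by
    unfold PlaneEmbedding.faceSize
    rw [Nat.card_eq_fintype_card, Fintype.card_eq_one_iff]
    refine ⟨⟨d, Equiv.Perm.SameCycle.refl _ _⟩, ?_⟩
    rintro ⟨x, hx⟩
    obtain ⟨n, hn⟩ := hx
    have hz : ∀ m : ℤ, (E.facePerm ^ m) d = d := fun m =>
      Equiv.Perm.zpow_apply_eq_self_of_apply_eq_self hfix m
    have hx' : x = d := by rw [← hn, hz n]
    exact Subtype.ext hx'
  omega

lemma facePerm_pow_faceSize (d : G.Dart) (hface : 3 ≤ E.faceSize d) :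
    (E.facePerm ^ (E.faceSize d)) d = d := by
  have hfix := facePerm_ne E d hface
  have hc := faceSize_eq_card_support E d hfix
  have hcyc := E.facePerm.isCycle_cycleOf (x := d) hfix
  have horder : orderOf (E.facePerm.cycleOf d) = E.faceSize d := by
    rw [hcyc.orderOf, hc]
  rw [← Equiv.Perm.cycleOf_pow_apply_self, ← horder, pow_orderOf_eq_one]
  rfl

lemma four_le_faceSize (htri : G.CliqueFree 3) (hface : ∀ d, 3 ≤ E.faceSize d)
    (d : G.Dart) : 4 ≤ E.faceSize d := by
  rcases Nat.lt_or_ge (E.faceSize d) 4 with h | h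
  · exfalso
    have h3 : E.faceSize d = 3 := le_antisymm (by omega) (hface d)
    have hp3 : (E.facePerm ^ 3) d = d := by
      have := facePerm_pow_faceSize E d (hface d); rwa [h3] at this
    set e1 := E.facePerm d with he1
    set e2 := E.facePerm e1 with he2
    have hclose : E.facePerm e2 = d := by
      rw [he2, he1]
      have hh : (E.facePerm ^ 3) d = E.facePerm (E.facePerm (E.facePerm d)) := by
        simp [pow_succ, Equiv.Perm.mul_apply]
      rw [← hh, hp3]
    have h1 : e1.fst = d.snd := facePerm_fst E d
    have h2 : e2.fst = e1.snd := facePerm_fst E e1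
    have h3' : d.fst = e2.snd := by
      have := facePerm_fst E e2; rw [hclose] at this; exact this
    have hab : G.Adj d.fst d.snd := d.adj
    have hbc : G.Adj d.snd e1.snd := h1 ▸ e1.adj
    have hca : G.Adj e1.snd d.fst := by
      have := e2.adj; rw [h2, ← h3'] at this; exact this
    exact htri {d.fst, d.snd, e1.snd}
      (is3Clique_triple_iff.mpr ⟨hab, hca.symm, hbc⟩)
  · exact h

lemma rotation3 (hδ : ∀ v, 3 ≤ G.degree v) {v : V} (hdeg : G.degree v = 3)
    {d₁ d₂ : G.Dart} (h1 : d₁.fst = v) (h2 : d₂.fst = v) (hne : d₁ ≠ d₂) :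
    E.next d₁ = d₂ ∨ E.next d₂ = d₁ := by
  by_contra hcon
  push_neg at hcon
  obtain ⟨ha, hb⟩ := hcon
  set F : Finset G.Dart := ({d : G.Dart | d.fst = v} : Finset _) with hF
  have hmem : ∀ d : G.Dart, d ∈ F ↔ d.fst = v := by
    intro d; rw [hF]; simp
  have hcard : F.card = 3 := by
    rw [hF, SimpleGraph.dart_fst_fiber_card_eq_degree]; exact hdeg
  have hn1 : (E.next d₁) ∈ F := by rw [hmem, E.next_fst]; exact h1
  have hd1 : d₁ ∈ F := (hmem d₁).mpr h1
  have hd2 : d₂ ∈ F := (hmem d₂).mpr h2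
  have hne1 : E.next d₁ ≠ d₁ := next_ne E hδ d₁
  set S : Finset G.Dart := {d₁, d₂, E.next d₁} with hS
  have hScard : S.card = 3 := by
    rw [hS, Finset.card_insert_of_notMem, Finset.card_insert_of_notMem,
      Finset.card_singleton]
    · simp only [Finset.mem_singleton]
      exact fun hc => ha hc.symm
    · simp only [Finset.mem_insert, Finset.mem_singleton]
      push_neg
      exact ⟨hne, fun hc => hne1 hc.symm⟩
  have hSsub : S ⊆ F := by
    intro x hx
    rw [hS] at hx
    simp only [Finset.mem_insert, Finset.mem_singleton] at hx
    rcases hx with rfl | rfl | rfl <;> assumption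
  have hFS : F = S := (Finset.eq_of_subset_of_card_le hSsub (by omega)).symm
  have hn2 : (E.next d₂) ∈ S := by
    rw [← hFS, hmem, E.next_fst]; exact h2
  rw [hS] at hn2
  simp only [Finset.mem_insert, Finset.mem_singleton] at hn2
  rcases hn2 with hc | hc | hc
  · exact hb hc
  · exact next_ne E hδ d₂ hc
  · exact hne (E.next.injective hc).symm

end Stmt16Aux
section Stmt16Defs

open Finset PlaneEmbedding

variable {V : Type} [Fintype V] [DecidableEq V] {G : SimpleGraph V} [DecidableRel G.Adj]
  (E : PlaneEmbedding G)

def rate (n : ℕ) : ℤ :=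
  if n ≤ 4 then 0 else if n = 5 then 6 else if n = 6 then 14 else if n = 7 then 18 else 21

lemma rate_nonneg (n : ℕ) : 0 ≤ rate n := by unfold rate; split_ifs <;> norm_num
lemma rate_eq_zero {n : ℕ} (h : n ≤ 4) : rate n = 0 := by unfold rate; rw [if_pos h]
lemma rate_five : rate 5 = 6 := by norm_num [rate]
lemma rate_six : rate 6 = 14 := by norm_num [rate]
lemma rate_seven : rate 7 = 18 := by norm_num [rate]
lemma rate_of_ge8 {n : ℕ} (h : 8 ≤ n) : rate n = 21 := by
  unfold rate; split_ifs <;> omega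
lemma rate_ge14 {n : ℕ} (h : 6 ≤ n) : 14 ≤ rate n := by
  unfold rate; split_ifs <;> omega
lemma rate_ge18 {n : ℕ} (h : 7 ≤ n) : 18 ≤ rate n := by
  unfold rate; split_ifs <;> omega

noncomputable def amtB (e : G.Dart) : ℤ :=
  if G.degree e.snd = 3 then rate (G.degree e.fst) else 0

noncomputable def amtT2 (e : G.Dart) : ℤ :=
  if E.faceSize e = 4 ∧ 5 ≤ G.degree e.fst ∧ G.degree e.snd ≤ 4 ∧
      G.degree (E.facePerm e).snd = 3 ∧ G.degree (E.facePerm (E.facePerm e)).snd = 7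
    then 3 else 0

noncomputable def amtT2' (e : G.Dart) : ℤ :=
  if E.faceSize e = 4 ∧ 5 ≤ G.degree e.fst ∧ G.degree e.snd = 7 ∧
      G.degree (E.facePerm e).snd = 3 ∧ G.degree (E.facePerm (E.facePerm e)).snd ≤ 4
    then 3 else 0

noncomputable def amtT3 (e : G.Dart) : ℤ :=
  if E.faceSize e = 4 ∧ G.degree e.fst = 7 ∧ G.degree e.snd = 4 ∧
      G.degree (E.facePerm e).snd ≤ 4 ∧ G.degree (E.facePerm (E.facePerm e)).snd = 3
    then 3 else 0

noncomputable def amtT3' (e : G.Dart) : ℤ :=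
  if E.faceSize e = 4 ∧ G.degree e.fst = 7 ∧ G.degree e.snd = 3 ∧
      G.degree (E.facePerm e).snd ≤ 4 ∧ G.degree (E.facePerm (E.facePerm e)).snd = 4
    then 3 else 0

noncomputable def amtT4 (e : G.Dart) : ℤ :=
  if 5 ≤ E.faceSize e ∧ G.degree e.fst = 3 ∧ G.degree e.snd = 7 ∧
      G.degree ((E.facePerm)⁻¹ e).fst ≤ 4
    then 3 else 0

noncomputable def amtT4' (e : G.Dart) : ℤ :=
  if 5 ≤ E.faceSize e ∧ G.degree e.fst = 3 ∧ G.degree e.snd ≤ 4 ∧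
      G.degree ((E.facePerm)⁻¹ e).fst = 7
    then 3 else 0

lemma amtB_nonneg (e : G.Dart) : 0 ≤ amtB e := by
  unfold amtB; split_ifs; exacts [rate_nonneg _, le_refl 0]
lemma amtT2_nonneg (e : G.Dart) : 0 ≤ amtT2 E e := by unfold amtT2; split_ifs <;> norm_num
lemma amtT2'_nonneg (e : G.Dart) : 0 ≤ amtT2' E e := by unfold amtT2'; split_ifs <;> norm_num
lemma amtT3_nonneg (e : G.Dart) : 0 ≤ amtT3 E e := by unfold amtT3; split_ifs <;> norm_num
lemma amtT3'_nonneg (e : G.Dart) : 0 ≤ amtT3' E e := by unfold amtT3'; split_ifs <;> norm_num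
lemma amtT4_nonneg (e : G.Dart) : 0 ≤ amtT4 E e := by unfold amtT4; split_ifs <;> norm_num
lemma amtT4'_nonneg (e : G.Dart) : 0 ≤ amtT4' E e := by unfold amtT4'; split_ifs <;> norm_num

noncomputable def inB (v : V) : ℤ := ∑ e : G.Dart, if e.snd = v then amtB e else 0
noncomputable def inT2 (v : V) : ℤ :=
  ∑ e : G.Dart, if (E.facePerm e).snd = v then amtT2 E e else 0
noncomputable def inT2' (v : V) : ℤ :=
  ∑ e : G.Dart, if (E.facePerm e).snd = v then amtT2' E e else 0
noncomputable def inT3 (v : V) : ℤ :=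
  ∑ e : G.Dart, if (E.facePerm (E.facePerm e)).snd = v then amtT3 E e else 0
noncomputable def inT3' (v : V) : ℤ :=
  ∑ e : G.Dart, if e.snd = v then amtT3' E e else 0
noncomputable def inT4 (v : V) : ℤ :=
  ∑ e : G.Dart, if e.fst = v then amtT4 E e else 0
noncomputable def inT4' (v : V) : ℤ :=
  ∑ e : G.Dart, if e.fst = v then amtT4' E e else 0
noncomputable def inVsum (v : V) : ℤ :=
  inB (G := G) v + inT2 E v + inT2' E v + inT3 E v + inT3' E v + inT4 E v + inT4' E v

noncomputable def payV (e : G.Dart) : ℤ :=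
  amtB (G := G) e + amtT2 E e + amtT2' E e + amtT3 E e + amtT3' E e
noncomputable def outVsum (w : V) : ℤ :=
  ∑ e : G.Dart, if e.fst = w then payV E e else 0

lemma sum_rec {β : Type} [Fintype β] [DecidableEq β] (amt : G.Dart → ℤ) (rec : G.Dart → β) :
    ∑ b : β, ∑ e : G.Dart, (if rec e = b then amt e else 0) = ∑ e : G.Dart, amt e := by
  rw [Finset.sum_comm]
  refine Finset.sum_congr rfl fun e _ => ?_
  rw [Finset.sum_ite_eq Finset.univ (rec e) (fun _ => amt e)]
  simp

lemma sum_ite_card {α : Type} {s : Finset α} (P : α → Prop) [DecidablePred P] (c : ℤ) :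
    (∑ e ∈ s, if P e then c else 0) = c * ((s.filter P).card : ℤ) := by
  rw [← Finset.sum_filter, Finset.sum_const, nsmul_eq_mul, mul_comm]

lemma facePerm_pow4 (hface : ∀ d, 3 ≤ E.faceSize d) (e : G.Dart) (h4 : E.faceSize e = 4) :
    E.facePerm (E.facePerm (E.facePerm (E.facePerm e))) = e := by
  have h := facePerm_pow_faceSize E e (hface e)
  rw [h4] at h
  simpa [pow_succ, Equiv.Perm.mul_apply] using h

lemma sameCycle_step (e : G.Dart) : E.facePerm.SameCycle e (E.facePerm e) := ⟨1, by simp⟩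

lemma dart_symm_fst (e : G.Dart) : (e.symm).fst = e.snd := rfl
lemma dart_symm_snd (e : G.Dart) : (e.symm).snd = e.fst := rfl

end Stmt16Defs
section Stmt16Audit

open Finset PlaneEmbedding

variable {V : Type} [Fintype V] [DecidableEq V] {G : SimpleGraph V} [DecidableRel G.Adj]
  (E : PlaneEmbedding G)

lemma outVsum_le (hδ : ∀ v, 3 ≤ G.degree v) (hface : ∀ d, 3 ≤ E.faceSize d) (w : V) :
    outVsum E w ≤ 42 * ((G.degree w : ℤ) - 4) + (if G.degree w = 3 then 42 else 0) := by
  set Fw : Finset G.Dart := ({d : G.Dart | d.fst = w} : Finset _) with hFw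
  have hmemF : ∀ e : G.Dart, e ∈ Fw ↔ e.fst = w := by intro e; rw [hFw]; simp
  have hcardF : Fw.card = G.degree w := by
    rw [hFw, SimpleGraph.dart_fst_fiber_card_eq_degree]
  have hout : outVsum E w = ∑ e ∈ Fw, payV E e := by
    rw [outVsum, hFw]
    exact (Finset.sum_filter _ _).symm
  rw [hout]
  simp only [payV, Finset.sum_add_distrib]
  -- counts
  set k3 := (Fw.filter (fun e => G.degree e.snd = 3)).card with hk3
  set q4 := (Fw.filter (fun e => G.degree e.snd = 4)).card with hq4
  set m7 := (Fw.filter (fun e => G.degree e.snd = 7)).card with hm7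
  have hdisj1 : Disjoint (Fw.filter (fun e => G.degree e.snd = 3))
      (Fw.filter (fun e => G.degree e.snd = 4)) := by
    refine Finset.disjoint_left.mpr fun x hx1 hx2 => ?_
    simp only [Finset.mem_filter] at hx1 hx2; omega
  have hdisj2 : Disjoint ((Fw.filter (fun e => G.degree e.snd = 3)) ∪
      (Fw.filter (fun e => G.degree e.snd = 4)))
      (Fw.filter (fun e => G.degree e.snd = 7)) := by
    refine Finset.disjoint_left.mpr fun x hx1 hx2 => ?_
    simp only [Finset.mem_union, Finset.mem_filter] at hx1 hx2
    rcases hx1 with h | h <;> omega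
  have hcount : k3 + q4 + m7 ≤ G.degree w := by
    rw [hk3, hq4, hm7, ← Finset.card_union_of_disjoint hdisj1,
      ← Finset.card_union_of_disjoint hdisj2, ← hcardF]
    exact Finset.card_le_card (Finset.union_subset
      (Finset.union_subset (Finset.filter_subset _ _) (Finset.filter_subset _ _))
      (Finset.filter_subset _ _))
  -- base sum
  have hBsum : ∑ e ∈ Fw, amtB (G := G) e ≤ rate (G.degree w) * (k3 : ℤ) := by
    have h0 : ∑ e ∈ Fw, amtB (G := G) e ≤
        ∑ e ∈ Fw, (if G.degree e.snd = 3 then rate (G.degree w) else 0) := by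
      refine Finset.sum_le_sum fun e he => ?_
      unfold amtB
      rw [(hmemF e).mp he]
    refine h0.trans (le_of_eq ?_)
    rw [sum_ite_card, ← hk3]
  -- T2' sum
  have hT2'sum : ∑ e ∈ Fw, amtT2' E e ≤ 3 * (m7 : ℤ) := by
    have h0 : ∑ e ∈ Fw, amtT2' E e ≤
        ∑ e ∈ Fw, (if G.degree e.snd = 7 then (3:ℤ) else 0) := by
      refine Finset.sum_le_sum fun e he => ?_
      unfold amtT2'
      by_cases h : E.faceSize e = 4 ∧ 5 ≤ G.degree e.fst ∧ G.degree e.snd = 7 ∧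
          G.degree (E.facePerm e).snd = 3 ∧ G.degree (E.facePerm (E.facePerm e)).snd ≤ 4
      · rw [if_pos h, if_pos h.2.2.1]
      · rw [if_neg h]; split_ifs <;> norm_num
    refine h0.trans (le_of_eq ?_)
    rw [sum_ite_card, ← hm7]
  -- T3 sum
  have hT3sum : ∑ e ∈ Fw, amtT3 E e ≤ 3 * (q4 : ℤ) := by
    have h0 : ∑ e ∈ Fw, amtT3 E e ≤
        ∑ e ∈ Fw, (if G.degree e.snd = 4 then (3:ℤ) else 0) := by
      refine Finset.sum_le_sum fun e he => ?_
      unfold amtT3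
      by_cases h : E.faceSize e = 4 ∧ G.degree e.fst = 7 ∧ G.degree e.snd = 4 ∧
          G.degree (E.facePerm e).snd ≤ 4 ∧ G.degree (E.facePerm (E.facePerm e)).snd = 3
      · rw [if_pos h, if_pos h.2.2.1]
      · rw [if_neg h]; split_ifs <;> norm_num
    refine h0.trans (le_of_eq ?_)
    rw [sum_ite_card, ← hq4]
  -- injective bounds
  have hinj3 : Function.Injective (fun e : G.Dart =>
      (E.facePerm (E.facePerm (E.facePerm e))).symm) := by
    intro a b h
    have h1 : E.facePerm (E.facePerm (E.facePerm a)) =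
        E.facePerm (E.facePerm (E.facePerm b)) := by
      have := congrArg SimpleGraph.Dart.symm h
      simpa using this
    exact E.facePerm.injective (E.facePerm.injective (E.facePerm.injective h1))
  have hT2sum : ∑ e ∈ Fw, amtT2 E e ≤ 3 * (m7 : ℤ) := by
    have h1 : ∑ e ∈ Fw, amtT2 E e = 3 * ((Fw.filter (fun e =>
        E.faceSize e = 4 ∧ 5 ≤ G.degree e.fst ∧ G.degree e.snd ≤ 4 ∧
        G.degree (E.facePerm e).snd = 3 ∧
        G.degree (E.facePerm (E.facePerm e)).snd = 7)).card : ℤ) := by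
      rw [← sum_ite_card _ 3]
      exact Finset.sum_congr rfl fun e _ => rfl
    rw [h1, hm7]
    have h2 : (Fw.filter (fun e =>
        E.faceSize e = 4 ∧ 5 ≤ G.degree e.fst ∧ G.degree e.snd ≤ 4 ∧
        G.degree (E.facePerm e).snd = 3 ∧
        G.degree (E.facePerm (E.facePerm e)).snd = 7)).card ≤
        (Fw.filter (fun e => G.degree e.snd = 7)).card := by
      apply Finset.card_le_card_of_injOn
        (fun e => (E.facePerm (E.facePerm (E.facePerm e))).symm)
      · intro e he
        rw [Finset.mem_coe, Finset.mem_filter] at he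
        obtain ⟨heF, h4, -, -, -, h7⟩ := he
        have hpow := facePerm_pow4 E hface e h4
        have hsnd : (E.facePerm (E.facePerm (E.facePerm e))).snd = w := by
          have := facePerm_fst E (E.facePerm (E.facePerm (E.facePerm e)))
          rw [hpow] at this
          rw [← this, (hmemF e).mp heF]
        have hfst : (E.facePerm (E.facePerm (E.facePerm e))).fst =
            (E.facePerm (E.facePerm e)).snd :=
          facePerm_fst E _
        rw [Finset.mem_coe, Finset.mem_filter]
        constructor
        · rw [hmemF, dart_symm_fst, hsnd]
        · rw [dart_symm_snd, hfst]; exact h7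
      · exact fun a _ b _ h => hinj3 h
    calc (3:ℤ) * _ ≤ 3 * ((Fw.filter (fun e => G.degree e.snd = 7)).card : ℤ) := by
          exact_mod_cast mul_le_mul_of_nonneg_left (by exact_mod_cast h2) (by norm_num)
    _ = _ := rfl
  have hT3'sum : ∑ e ∈ Fw, amtT3' E e ≤ 3 * (q4 : ℤ) := by
    have h1 : ∑ e ∈ Fw, amtT3' E e = 3 * ((Fw.filter (fun e =>
        E.faceSize e = 4 ∧ G.degree e.fst = 7 ∧ G.degree e.snd = 3 ∧
        G.degree (E.facePerm e).snd ≤ 4 ∧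
        G.degree (E.facePerm (E.facePerm e)).snd = 4)).card : ℤ) := by
      rw [← sum_ite_card _ 3]
      exact Finset.sum_congr rfl fun e _ => rfl
    rw [h1, hq4]
    have h2 : (Fw.filter (fun e =>
        E.faceSize e = 4 ∧ G.degree e.fst = 7 ∧ G.degree e.snd = 3 ∧
        G.degree (E.facePerm e).snd ≤ 4 ∧
        G.degree (E.facePerm (E.facePerm e)).snd = 4)).card ≤
        (Fw.filter (fun e => G.degree e.snd = 4)).card := by
      apply Finset.card_le_card_of_injOn
        (fun e => (E.facePerm (E.facePerm (E.facePerm e))).symm)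
      · intro e he
        rw [Finset.mem_coe, Finset.mem_filter] at he
        obtain ⟨heF, h4, -, -, -, hs4⟩ := he
        have hpow := facePerm_pow4 E hface e h4
        have hsnd : (E.facePerm (E.facePerm (E.facePerm e))).snd = w := by
          have := facePerm_fst E (E.facePerm (E.facePerm (E.facePerm e)))
          rw [hpow] at this
          rw [← this, (hmemF e).mp heF]
        have hfst : (E.facePerm (E.facePerm (E.facePerm e))).fst =
            (E.facePerm (E.facePerm e)).snd :=
          facePerm_fst E _
        rw [Finset.mem_coe, Finset.mem_filter]
        constructor
        · rw [hmemF, dart_symm_fst, hsnd]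
        · rw [dart_symm_snd, hfst]; exact hs4
      · exact fun a _ b _ h => hinj3 h
    calc (3:ℤ) * _ ≤ 3 * ((Fw.filter (fun e => G.degree e.snd = 4)).card : ℤ) := by
          exact_mod_cast mul_le_mul_of_nonneg_left (by exact_mod_cast h2) (by norm_num)
    _ = _ := rfl
  -- zero lemmas
  have hT2zero : ¬ (5 ≤ G.degree w) → ∑ e ∈ Fw, amtT2 E e = 0 := by
    intro hlt
    refine Finset.sum_eq_zero fun e he => ?_
    unfold amtT2
    rw [if_neg]
    rw [(hmemF e).mp he] at *
    intro hcond
    exact hlt hcond.2.1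
  have hT2'zero : ¬ (5 ≤ G.degree w) → ∑ e ∈ Fw, amtT2' E e = 0 := by
    intro hlt
    refine Finset.sum_eq_zero fun e he => ?_
    unfold amtT2'
    rw [if_neg]
    rw [(hmemF e).mp he] at *
    intro hcond
    exact hlt hcond.2.1
  have hT3zero : G.degree w ≠ 7 → ∑ e ∈ Fw, amtT3 E e = 0 := by
    intro hlt
    refine Finset.sum_eq_zero fun e he => ?_
    unfold amtT3
    rw [if_neg]
    rw [(hmemF e).mp he] at *
    intro hcond
    exact hlt hcond.2.1
  have hT3'zero : G.degree w ≠ 7 → ∑ e ∈ Fw, amtT3' E e = 0 := by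
    intro hlt
    refine Finset.sum_eq_zero fun e he => ?_
    unfold amtT3'
    rw [if_neg]
    rw [(hmemF e).mp he] at *
    intro hcond
    exact hlt hcond.2.1
  have hBzero : G.degree w ≤ 4 → ∑ e ∈ Fw, amtB (G := G) e = 0 := by
    intro hle
    refine Finset.sum_eq_zero fun e he => ?_
    unfold amtB
    rw [(hmemF e).mp he]
    rw [rate_eq_zero hle]
    split_ifs <;> rfl
  -- case analysis
  have hd3 := hδ w
  have hk3c : (0:ℤ) ≤ (k3 : ℤ) := by positivity
  have hq4c : (0:ℤ) ≤ (q4 : ℤ) := by positivity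
  have hm7c : (0:ℤ) ≤ (m7 : ℤ) := by positivity
  have hcountZ : (k3 : ℤ) + q4 + m7 ≤ (G.degree w : ℤ) := by exact_mod_cast hcount
  rcases Nat.lt_or_ge (G.degree w) 8 with h8 | h8
  · interval_cases hD : (G.degree w)
    · -- degree 3
      rw [hBzero (by omega), hT2zero (by omega), hT2'zero (by omega),
        hT3zero (by omega), hT3'zero (by omega)]
      norm_num
    · rw [hBzero (by omega), hT2zero (by omega), hT2'zero (by omega),
        hT3zero (by omega), hT3'zero (by omega)]
      norm_num
    · -- degree 5
      rw [hT3zero (by omega), hT3'zero (by omega)]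
      rw [rate_five] at hBsum
      push_cast at hcountZ
      norm_num
      linarith
    · -- degree 6
      rw [hT3zero (by omega), hT3'zero (by omega)]
      rw [rate_six] at hBsum
      push_cast at hcountZ
      norm_num
      linarith
    · -- degree 7
      rw [rate_seven] at hBsum
      push_cast at hcountZ
      norm_num
      linarith
  · -- degree ≥ 8
    rw [hT3zero (by omega), hT3'zero (by omega)]
    rw [rate_of_ge8 h8] at hBsum
    rw [if_neg (by omega : ¬ G.degree w = 3)]
    have h8z : (8:ℤ) ≤ (G.degree w : ℤ) := by exact_mod_cast h8
    linarith

end Stmt16Audit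
section Stmt16Faces

open Finset PlaneEmbedding

variable {V : Type} [Fintype V] [DecidableEq V] {G : SimpleGraph V} [DecidableRel G.Adj]
  (E : PlaneEmbedding G)

noncomputable instance fintypeFaces : Fintype (Quotient E.faceSetoid) :=
  @Quotient.fintype _ _ E.faceSetoid
    (fun a b => inferInstanceAs (Decidable (E.facePerm.SameCycle a b)))

noncomputable instance decEqFaces : DecidableEq (Quotient E.faceSetoid) :=
  @Quotient.decidableEq _ E.faceSetoid
    (fun a b => inferInstanceAs (Decidable (E.facePerm.SameCycle a b)))

noncomputable def fSize (q : Quotient E.faceSetoid) : ℕ :=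
  (Finset.univ.filter (fun e : G.Dart => Quotient.mk E.faceSetoid e = q)).card

noncomputable def outF (q : Quotient E.faceSetoid) : ℤ :=
  ∑ e : G.Dart, if Quotient.mk E.faceSetoid e = q then amtT4 E e + amtT4' E e else 0

lemma fSize_eq (e : G.Dart) : fSize E (Quotient.mk E.faceSetoid e) = E.faceSize e := by
  unfold fSize PlaneEmbedding.faceSize
  rw [Nat.card_eq_fintype_card, Fintype.card_subtype]
  congr 1
  ext x
  simp only [Finset.mem_filter, Finset.mem_univ, true_and]
  constructor
  · intro h
    exact (Quotient.exact h).symm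
  · intro h
    exact Quotient.sound h.symm

lemma sum_fSize : ∑ q : Quotient E.faceSetoid, (fSize E q) = Fintype.card G.Dart := by
  rw [← Finset.card_univ,
    Finset.card_eq_sum_card_fiberwise
      (f := fun e : G.Dart => Quotient.mk E.faceSetoid e)
      (t := Finset.univ) (fun x _ => Finset.mem_univ _)]
  rfl

lemma sum_outF : ∑ q : Quotient E.faceSetoid, outF E q
    = ∑ e : G.Dart, (amtT4 E e + amtT4' E e) :=
  sum_rec _ _

lemma amtT4_add_le (e : G.Dart) : amtT4 E e + amtT4' E e ≤ 3 := by
  unfold amtT4 amtT4'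
  split_ifs with h1 h2 h2
  · exfalso
    have := h1.2.2.1
    have := h2.2.2.1
    omega
  · norm_num
  · norm_num
  · norm_num

lemma outF_le (htri : G.CliqueFree 3) (hface : ∀ d, 3 ≤ E.faceSize d)
    (q : Quotient E.faceSetoid) : outF E q ≤ 42 * ((fSize E q : ℤ) - 4) := by
  obtain ⟨e₀, rfl⟩ := Quotient.exists_rep q
  have hfs : ∀ e : G.Dart, Quotient.mk E.faceSetoid e = Quotient.mk E.faceSetoid e₀ →
      E.faceSize e = E.faceSize e₀ := fun e h => faceSize_congr E (Quotient.exact h)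
  rw [fSize_eq]
  rcases Nat.lt_or_ge (E.faceSize e₀) 5 with h5 | h5
  · have h4 : E.faceSize e₀ = 4 :=
      le_antisymm (by omega) (four_le_faceSize E htri hface e₀)
    have hz : outF E (Quotient.mk E.faceSetoid e₀) = 0 := by
      unfold outF
      refine Finset.sum_eq_zero fun e _ => ?_
      split_ifs with h
      · have hfse : E.faceSize e = 4 := (hfs e h).trans h4
        unfold amtT4 amtT4'
        rw [if_neg (fun hc => by omega), if_neg (fun hc => by omega)]
        norm_num
      · rfl
    rw [hz, h4]
    norm_num
  · have hb : outF E (Quotient.mk E.faceSetoid e₀) ≤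
        ∑ e : G.Dart, (if Quotient.mk E.faceSetoid e = Quotient.mk E.faceSetoid e₀
          then (3:ℤ) else 0) := by
      unfold outF
      refine Finset.sum_le_sum fun e _ => ?_
      split_ifs with h
      · exact amtT4_add_le E e
      · exact le_refl 0
    have hcard : (∑ e : G.Dart, (if Quotient.mk E.faceSetoid e = Quotient.mk E.faceSetoid e₀
        then (3:ℤ) else 0)) = 3 * ((fSize E (Quotient.mk E.faceSetoid e₀)) : ℤ) := by
      rw [sum_ite_card]
      rfl
    rw [fSize_eq] at hcard
    have h5' : (5:ℤ) ≤ (E.faceSize e₀ : ℤ) := by exact_mod_cast h5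
    calc outF E (Quotient.mk E.faceSetoid e₀) ≤ _ := hb
      _ = 3 * ((E.faceSize e₀ : ℤ)) := hcard
      _ ≤ 42 * ((E.faceSize e₀ : ℤ) - 4) := by linarith

end Stmt16Faces
section Stmt16Receipts

open Finset PlaneEmbedding

variable {V : Type} [Fintype V] [DecidableEq V] {G : SimpleGraph V} [DecidableRel G.Adj]
  (E : PlaneEmbedding G)

lemma inB_nonneg (v : V) : 0 ≤ inB (G := G) v :=
  Finset.sum_nonneg fun e _ => by split_ifs; exacts [amtB_nonneg e, le_rfl]
lemma inT2_nonneg (v : V) : 0 ≤ inT2 E v :=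
  Finset.sum_nonneg fun e _ => by split_ifs; exacts [amtT2_nonneg E e, le_rfl]
lemma inT2'_nonneg (v : V) : 0 ≤ inT2' E v :=
  Finset.sum_nonneg fun e _ => by split_ifs; exacts [amtT2'_nonneg E e, le_rfl]
lemma inT3_nonneg (v : V) : 0 ≤ inT3 E v :=
  Finset.sum_nonneg fun e _ => by split_ifs; exacts [amtT3_nonneg E e, le_rfl]
lemma inT3'_nonneg (v : V) : 0 ≤ inT3' E v :=
  Finset.sum_nonneg fun e _ => by split_ifs; exacts [amtT3'_nonneg E e, le_rfl]
lemma inT4_nonneg (v : V) : 0 ≤ inT4 E v :=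
  Finset.sum_nonneg fun e _ => by split_ifs; exacts [amtT4_nonneg E e, le_rfl]
lemma inT4'_nonneg (v : V) : 0 ≤ inT4' E v :=
  Finset.sum_nonneg fun e _ => by split_ifs; exacts [amtT4'_nonneg E e, le_rfl]

lemma inVsum_nonneg (v : V) : 0 ≤ inVsum E v := by
  unfold inVsum
  have h1 := inB_nonneg (G := G) v
  have h2 := inT2_nonneg E v
  have h3 := inT2'_nonneg E v
  have h4 := inT3_nonneg E v
  have h5 := inT3'_nonneg E v
  have h6 := inT4_nonneg E v
  have h7 := inT4'_nonneg E v
  linarith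

/-- Orientation 1 supplement: the corner `u'-v-x` is traversed as `u' → v → x`. -/
lemma supplement_or1 (hδ : ∀ v, 3 ≤ G.degree v) (hface : ∀ d, 3 ≤ E.faceSize d)
    (htri : G.CliqueFree 3)
    (hC1 : ∀ {v a b : V}, G.degree v = 3 → G.Adj v a → G.Adj v b → a ≠ b →
      G.degree a ≤ 5 → 7 ≤ G.degree b)
    (hC2 : ∀ {u a b : V}, G.degree u ≤ 4 → G.Adj u a → G.Adj u b → a ≠ b →
      G.degree a = 3 → G.degree b = 3 → False)
    {v u' x : V} (hv : G.degree v = 3) (hu : G.degree u' ≤ 4) (hx : G.degree x = 7)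
    (hvu : G.Adj v u') (hvx : G.Adj v x)
    (hnext : E.next ⟨(v,u'), hvu⟩ = ⟨(v,x), hvx⟩) :
    3 ≤ inT2 E v + inT3 E v + inT4 E v := by
  have hT2n := inT2_nonneg E v
  have hT3n := inT3_nonneg E v
  have hT4n := inT4_nonneg E v
  set w₀ : G.Dart := ⟨(u', v), hvu.symm⟩ with hw₀
  have hsymm : w₀.symm = (⟨(v,u'), hvu⟩ : G.Dart) := by
    apply SimpleGraph.Dart.ext; rfl
  have hσw₀ : E.facePerm w₀ = (⟨(v,x), hvx⟩ : G.Dart) := by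
    rw [facePerm_apply, hsymm, hnext]
  rcases Nat.lt_or_ge (E.faceSize w₀) 5 with hlt | hge
  swap
  · -- big face : T4 fires at the dart (v,x)
    have h1 : E.faceSize (⟨(v,x), hvx⟩ : G.Dart) = E.faceSize w₀ := by
      rw [← hσw₀]
      exact (faceSize_congr E (sameCycle_step E w₀)).symm
    have hcond : 5 ≤ E.faceSize (⟨(v,x), hvx⟩ : G.Dart) ∧
        G.degree (⟨(v,x), hvx⟩ : G.Dart).fst = 3 ∧
        G.degree (⟨(v,x), hvx⟩ : G.Dart).snd = 7 ∧
        G.degree ((E.facePerm)⁻¹ (⟨(v,x), hvx⟩ : G.Dart)).fst ≤ 4 := by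
      refine ⟨by rw [h1]; exact hge, hv, hx, ?_⟩
      have hinv : (E.facePerm)⁻¹ (⟨(v,x), hvx⟩ : G.Dart) = w₀ := by
        rw [← hσw₀, Equiv.Perm.inv_def, Equiv.symm_apply_apply]
      rw [hinv]; exact hu
    have hfire : (if (⟨(v,x), hvx⟩ : G.Dart).fst = v
        then amtT4 E (⟨(v,x), hvx⟩ : G.Dart) else 0) = 3 := by
      rw [if_pos rfl]
      unfold amtT4
      rw [if_pos hcond]
    have hle : (if (⟨(v,x), hvx⟩ : G.Dart).fst = v
        then amtT4 E (⟨(v,x), hvx⟩ : G.Dart) else 0) ≤ inT4 E v := by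
      unfold inT4
      refine Finset.single_le_sum (f := fun e : G.Dart =>
        if e.fst = v then amtT4 E e else 0) (fun i _ => ?_) (Finset.mem_univ _)
      split_ifs; exacts [amtT4_nonneg E i, le_rfl]
    rw [hfire] at hle
    linarith
  · -- 4-face
    have h4 : E.faceSize w₀ = 4 :=
      le_antisymm (by omega) (four_le_faceSize E htri hface w₀)
    set e1 := E.facePerm (E.facePerm w₀) with he1
    set e2 := E.facePerm e1 with he2
    have hpow := facePerm_pow4 E hface w₀ h4
    have hσe2 : E.facePerm e2 = w₀ := by rw [he2, he1]; exact hpow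
    have he1fst : e1.fst = x := by
      rw [he1, facePerm_fst, hσw₀]
    set s := e1.snd with hs
    have hsv : s ≠ v := by
      intro hsveq
      have hxv : (E.facePerm w₀).symm = (⟨(x,v), hvx.symm⟩ : G.Dart) := by
        rw [hσw₀]; apply SimpleGraph.Dart.ext; rfl
      have he1next : e1 = E.next (⟨(x,v), hvx.symm⟩ : G.Dart) := by
        rw [he1, facePerm_apply, hxv]
      apply next_ne E hδ (⟨(x,v), hvx.symm⟩ : G.Dart)
      rw [← he1next]
      apply SimpleGraph.Dart.ext
      show e1.toProd = (x, v)
      have hp : e1.toProd = (e1.fst, e1.snd) := rfl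
      rw [hp, he1fst, ← hs, hsveq]
    have he2fst : e2.fst = s := by rw [he2, facePerm_fst, hs]
    have he2snd : e2.snd = u' := by
      have h := facePerm_fst E e2
      rw [hσe2] at h
      exact h.symm
    have hadj_su : G.Adj s u' := by
      have h := e2.adj
      rw [he2fst, he2snd] at h
      exact h
    have hs4 : 4 ≤ G.degree s := by
      by_cases hu'3 : G.degree u' = 3
      · have h7 := hC1 hu'3 hvu.symm hadj_su.symm (fun h => hsv h.symm)
          (by rw [hv]; omega)
        omega
      · have hu'4 : G.degree u' = 4 := by have := hδ u'; omega
        by_contra hlt4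
        have hs3 : G.degree s = 3 := by have := hδ s; omega
        exact hC2 (le_of_eq hu'4) hvu.symm hadj_su.symm (fun h => hsv h.symm) hv hs3
    have hsc1 : E.facePerm.SameCycle w₀ e1 := by
      rw [he1]; exact (sameCycle_step E w₀).trans (sameCycle_step E _)
    have hsc2 : E.facePerm.SameCycle w₀ e2 := by
      rw [he2]; exact hsc1.trans (sameCycle_step E e1)
    have hfs1 : E.faceSize e1 = 4 := by rw [← faceSize_congr E hsc1]; exact h4
    have hfs2 : E.faceSize e2 = 4 := by rw [← faceSize_congr E hsc2]; exact h4
    rcases Nat.lt_or_ge (G.degree s) 5 with hs45 | hs5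
    · -- deg s = 4 : T3 fires at e1
      have hds : G.degree s = 4 := by omega
      have hcond : E.faceSize e1 = 4 ∧ G.degree e1.fst = 7 ∧ G.degree e1.snd = 4 ∧
          G.degree (E.facePerm e1).snd ≤ 4 ∧
          G.degree (E.facePerm (E.facePerm e1)).snd = 3 := by
        refine ⟨hfs1, by rw [he1fst]; exact hx, by rw [← hs]; exact hds, ?_, ?_⟩
        · rw [← he2, he2snd]; exact hu
        · rw [← he2, hσe2]; exact hv
      have hrec : (E.facePerm (E.facePerm e1)).snd = v := by
        rw [← he2, hσe2]
      have hfire : (if (E.facePerm (E.facePerm e1)).snd = v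
          then amtT3 E e1 else 0) = 3 := by
        rw [if_pos hrec]
        unfold amtT3
        rw [if_pos hcond]
      have hle : (if (E.facePerm (E.facePerm e1)).snd = v
          then amtT3 E e1 else 0) ≤ inT3 E v := by
        unfold inT3
        refine Finset.single_le_sum (f := fun e : G.Dart =>
          if (E.facePerm (E.facePerm e)).snd = v then amtT3 E e else 0)
          (fun i _ => ?_) (Finset.mem_univ e1)
        split_ifs; exacts [amtT3_nonneg E i, le_rfl]
      rw [hfire] at hle
      linarith
    · -- deg s ≥ 5 : T2 fires at e2
      have hcond : E.faceSize e2 = 4 ∧ 5 ≤ G.degree e2.fst ∧ G.degree e2.snd ≤ 4 ∧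
          G.degree (E.facePerm e2).snd = 3 ∧
          G.degree (E.facePerm (E.facePerm e2)).snd = 7 := by
        refine ⟨hfs2, by rw [he2fst]; exact hs5, by rw [he2snd]; exact hu, ?_, ?_⟩
        · rw [hσe2]; exact hv
        · rw [hσe2, hσw₀]; exact hx
      have hrec : (E.facePerm e2).snd = v := by rw [hσe2]
      have hfire : (if (E.facePerm e2).snd = v then amtT2 E e2 else 0) = 3 := by
        rw [if_pos hrec]
        unfold amtT2
        rw [if_pos hcond]
      have hle : (if (E.facePerm e2).snd = v then amtT2 E e2 else 0) ≤ inT2 E v := by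
        unfold inT2
        refine Finset.single_le_sum (f := fun e : G.Dart =>
          if (E.facePerm e).snd = v then amtT2 E e else 0)
          (fun i _ => ?_) (Finset.mem_univ e2)
        split_ifs; exacts [amtT2_nonneg E i, le_rfl]
      rw [hfire] at hle
      linarith

/-- Orientation 2 supplement: the corner is traversed as `x → v → u'`. -/
lemma supplement_or2 (hδ : ∀ v, 3 ≤ G.degree v) (hface : ∀ d, 3 ≤ E.faceSize d)
    (htri : G.CliqueFree 3)
    (hC1 : ∀ {v a b : V}, G.degree v = 3 → G.Adj v a → G.Adj v b → a ≠ b →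
      G.degree a ≤ 5 → 7 ≤ G.degree b)
    (hC2 : ∀ {u a b : V}, G.degree u ≤ 4 → G.Adj u a → G.Adj u b → a ≠ b →
      G.degree a = 3 → G.degree b = 3 → False)
    {v u' x : V} (hv : G.degree v = 3) (hu : G.degree u' ≤ 4) (hx : G.degree x = 7)
    (hvu : G.Adj v u') (hvx : G.Adj v x)
    (hnext : E.next ⟨(v,x), hvx⟩ = ⟨(v,u'), hvu⟩) :
    3 ≤ inT2' E v + inT3' E v + inT4' E v := by
  have hT2n := inT2'_nonneg E v
  have hT3n := inT3'_nonneg E v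
  have hT4n := inT4'_nonneg E v
  set w₀ : G.Dart := ⟨(x, v), hvx.symm⟩ with hw₀
  have hsymm : w₀.symm = (⟨(v,x), hvx⟩ : G.Dart) := by
    apply SimpleGraph.Dart.ext; rfl
  have hσw₀ : E.facePerm w₀ = (⟨(v,u'), hvu⟩ : G.Dart) := by
    rw [facePerm_apply, hsymm, hnext]
  rcases Nat.lt_or_ge (E.faceSize w₀) 5 with hlt | hge
  swap
  · -- big face : T4' fires at the dart (v,u')
    have h1 : E.faceSize (⟨(v,u'), hvu⟩ : G.Dart) = E.faceSize w₀ := by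
      rw [← hσw₀]
      exact (faceSize_congr E (sameCycle_step E w₀)).symm
    have hcond : 5 ≤ E.faceSize (⟨(v,u'), hvu⟩ : G.Dart) ∧
        G.degree (⟨(v,u'), hvu⟩ : G.Dart).fst = 3 ∧
        G.degree (⟨(v,u'), hvu⟩ : G.Dart).snd ≤ 4 ∧
        G.degree ((E.facePerm)⁻¹ (⟨(v,u'), hvu⟩ : G.Dart)).fst = 7 := by
      refine ⟨by rw [h1]; exact hge, hv, hu, ?_⟩
      have hinv : (E.facePerm)⁻¹ (⟨(v,u'), hvu⟩ : G.Dart) = w₀ := by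
        rw [← hσw₀, Equiv.Perm.inv_def, Equiv.symm_apply_apply]
      rw [hinv]; exact hx
    have hfire : (if (⟨(v,u'), hvu⟩ : G.Dart).fst = v
        then amtT4' E (⟨(v,u'), hvu⟩ : G.Dart) else 0) = 3 := by
      rw [if_pos rfl]
      unfold amtT4'
      rw [if_pos hcond]
    have hle : (if (⟨(v,u'), hvu⟩ : G.Dart).fst = v
        then amtT4' E (⟨(v,u'), hvu⟩ : G.Dart) else 0) ≤ inT4' E v := by
      unfold inT4'
      refine Finset.single_le_sum (f := fun e : G.Dart =>
        if e.fst = v then amtT4' E e else 0) (fun i _ => ?_) (Finset.mem_univ _)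
      split_ifs; exacts [amtT4'_nonneg E i, le_rfl]
    rw [hfire] at hle
    linarith
  · -- 4-face
    have h4 : E.faceSize w₀ = 4 :=
      le_antisymm (by omega) (four_le_faceSize E htri hface w₀)
    set e1 := E.facePerm (E.facePerm w₀) with he1
    set e2 := E.facePerm e1 with he2
    have hpow := facePerm_pow4 E hface w₀ h4
    have hσe2 : E.facePerm e2 = w₀ := by rw [he2, he1]; exact hpow
    have he1fst : e1.fst = u' := by
      rw [he1, facePerm_fst, hσw₀]
    set s := e1.snd with hs
    have hsv : s ≠ v := by
      intro hsveq
      have hxv : (E.facePerm w₀).symm = (⟨(u',v), hvu.symm⟩ : G.Dart) := by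
        rw [hσw₀]; apply SimpleGraph.Dart.ext; rfl
      have he1next : e1 = E.next (⟨(u',v), hvu.symm⟩ : G.Dart) := by
        rw [he1, facePerm_apply, hxv]
      apply next_ne E hδ (⟨(u',v), hvu.symm⟩ : G.Dart)
      rw [← he1next]
      apply SimpleGraph.Dart.ext
      show e1.toProd = (u', v)
      have hp : e1.toProd = (e1.fst, e1.snd) := rfl
      rw [hp, he1fst, ← hs, hsveq]
    have he2fst : e2.fst = s := by rw [he2, facePerm_fst, hs]
    have he2snd : e2.snd = x := by
      have h := facePerm_fst E e2
      rw [hσe2] at h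
      exact h.symm
    have hadj_su : G.Adj s u' := by
      have h := e1.adj
      rw [he1fst, ← hs] at h
      exact h.symm
    have hs4 : 4 ≤ G.degree s := by
      by_cases hu'3 : G.degree u' = 3
      · have h7 := hC1 hu'3 hvu.symm hadj_su.symm (fun h => hsv h.symm)
          (by rw [hv]; omega)
        omega
      · have hu'4 : G.degree u' = 4 := by have := hδ u'; omega
        by_contra hlt4
        have hs3 : G.degree s = 3 := by have := hδ s; omega
        exact hC2 (le_of_eq hu'4) hvu.symm hadj_su.symm (fun h => hsv h.symm) hv hs3
    have hsc1 : E.facePerm.SameCycle w₀ e1 := by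
      rw [he1]; exact (sameCycle_step E w₀).trans (sameCycle_step E _)
    have hsc2 : E.facePerm.SameCycle w₀ e2 := by
      rw [he2]; exact hsc1.trans (sameCycle_step E e1)
    have hfs1 : E.faceSize e1 = 4 := by rw [← faceSize_congr E hsc1]; exact h4
    have hfs2 : E.faceSize e2 = 4 := by rw [← faceSize_congr E hsc2]; exact h4
    rcases Nat.lt_or_ge (G.degree s) 5 with hs45 | hs5
    · -- deg s = 4 : T3' fires at w₀
      have hds : G.degree s = 4 := by omega
      have hcond : E.faceSize w₀ = 4 ∧ G.degree w₀.fst = 7 ∧ G.degree w₀.snd = 3 ∧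
          G.degree (E.facePerm w₀).snd ≤ 4 ∧
          G.degree (E.facePerm (E.facePerm w₀)).snd = 4 := by
        refine ⟨h4, hx, hv, ?_, ?_⟩
        · rw [hσw₀]; exact hu
        · rw [← he1, ← hs]; exact hds
      have hfire : (if w₀.snd = v then amtT3' E w₀ else 0) = 3 := by
        rw [if_pos rfl]
        unfold amtT3'
        rw [if_pos hcond]
      have hle : (if w₀.snd = v then amtT3' E w₀ else 0) ≤ inT3' E v := by
        unfold inT3'
        refine Finset.single_le_sum (f := fun e : G.Dart =>
          if e.snd = v then amtT3' E e else 0)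
          (fun i _ => ?_) (Finset.mem_univ w₀)
        split_ifs; exacts [amtT3'_nonneg E i, le_rfl]
      rw [hfire] at hle
      linarith
    · -- deg s ≥ 5 : T2' fires at e2
      have hcond : E.faceSize e2 = 4 ∧ 5 ≤ G.degree e2.fst ∧ G.degree e2.snd = 7 ∧
          G.degree (E.facePerm e2).snd = 3 ∧
          G.degree (E.facePerm (E.facePerm e2)).snd ≤ 4 := by
        refine ⟨hfs2, by rw [he2fst]; exact hs5, by rw [he2snd]; exact hx, ?_, ?_⟩
        · rw [hσe2]; exact hv
        · rw [hσe2, hσw₀]; exact hu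
      have hrec : (E.facePerm e2).snd = v := by rw [hσe2]
      have hfire : (if (E.facePerm e2).snd = v then amtT2' E e2 else 0) = 3 := by
        rw [if_pos hrec]
        unfold amtT2'
        rw [if_pos hcond]
      have hle : (if (E.facePerm e2).snd = v then amtT2' E e2 else 0) ≤ inT2' E v := by
        unfold inT2'
        refine Finset.single_le_sum (f := fun e : G.Dart =>
          if (E.facePerm e).snd = v then amtT2' E e else 0)
          (fun i _ => ?_) (Finset.mem_univ e2)
        split_ifs; exacts [amtT2'_nonneg E i, le_rfl]
      rw [hfire] at hle
      linarith

end Stmt16Receipts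
section Stmt16Final

open Finset PlaneEmbedding

variable {V : Type} [Fintype V] [DecidableEq V] {G : SimpleGraph V} [DecidableRel G.Adj]
  (E : PlaneEmbedding G)

lemma inB_ge_pair {v a b : V} (hv : G.degree v = 3) (hva : G.Adj v a) (hvb : G.Adj v b)
    (hab : a ≠ b) : rate (G.degree a) + rate (G.degree b) ≤ inB (G := G) v := by
  set da : G.Dart := ⟨(a, v), hva.symm⟩ with hda
  set db : G.Dart := ⟨(b, v), hvb.symm⟩ with hdb
  have hne : da ≠ db := fun h => hab (congrArg (fun d : G.Dart => d.fst) h)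
  have hsum : ∑ e ∈ ({da, db} : Finset G.Dart), (if e.snd = v then amtB (G := G) e else 0)
      ≤ inB (G := G) v := by
    unfold inB
    refine Finset.sum_le_sum_of_subset_of_nonneg (Finset.subset_univ _) fun i _ _ => ?_
    split_ifs; exacts [amtB_nonneg i, le_rfl]
  rw [Finset.sum_pair hne] at hsum
  have hfa : (if da.snd = v then amtB (G := G) da else 0) = rate (G.degree a) := by
    rw [if_pos rfl]; unfold amtB; rw [if_pos hv]
  have hfb : (if db.snd = v then amtB (G := G) db else 0) = rate (G.degree b) := by
    rw [if_pos rfl]; unfold amtB; rw [if_pos hv]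
  rw [hfa, hfb] at hsum
  exact hsum

lemma inB_ge_triple {v a b c : V} (hv : G.degree v = 3) (hva : G.Adj v a) (hvb : G.Adj v b)
    (hvc : G.Adj v c) (hab : a ≠ b) (hac : a ≠ c) (hbc : b ≠ c) :
    rate (G.degree a) + rate (G.degree b) + rate (G.degree c) ≤ inB (G := G) v := by
  set da : G.Dart := ⟨(a, v), hva.symm⟩ with hda
  set db : G.Dart := ⟨(b, v), hvb.symm⟩ with hdb
  set dc : G.Dart := ⟨(c, v), hvc.symm⟩ with hdc
  have hnab : da ≠ db := fun h => hab (congrArg (fun d : G.Dart => d.fst) h)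
  have hnac : da ≠ dc := fun h => hac (congrArg (fun d : G.Dart => d.fst) h)
  have hnbc : db ≠ dc := fun h => hbc (congrArg (fun d : G.Dart => d.fst) h)
  have hsum : ∑ e ∈ ({da, db, dc} : Finset G.Dart),
      (if e.snd = v then amtB (G := G) e else 0) ≤ inB (G := G) v := by
    unfold inB
    refine Finset.sum_le_sum_of_subset_of_nonneg (Finset.subset_univ _) fun i _ _ => ?_
    split_ifs; exacts [amtB_nonneg i, le_rfl]
  rw [Finset.sum_insert (by simp [hnab, hnac]), Finset.sum_pair hnbc] at hsum
  have hfa : (if da.snd = v then amtB (G := G) da else 0) = rate (G.degree a) := by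
    rw [if_pos rfl]; unfold amtB; rw [if_pos hv]
  have hfb : (if db.snd = v then amtB (G := G) db else 0) = rate (G.degree b) := by
    rw [if_pos rfl]; unfold amtB; rw [if_pos hv]
  have hfc : (if dc.snd = v then amtB (G := G) dc else 0) = rate (G.degree c) := by
    rw [if_pos rfl]; unfold amtB; rw [if_pos hv]
  rw [hfa, hfb, hfc] at hsum
  linarith

lemma receipts_caseB (hδ : ∀ v, 3 ≤ G.degree v) (hface : ∀ d, 3 ≤ E.faceSize d)
    (htri : G.CliqueFree 3)
    (hC1 : ∀ {v a b : V}, G.degree v = 3 → G.Adj v a → G.Adj v b → a ≠ b →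
      G.degree a ≤ 5 → 7 ≤ G.degree b)
    (hC2 : ∀ {u a b : V}, G.degree u ≤ 4 → G.Adj u a → G.Adj u b → a ≠ b →
      G.degree a = 3 → G.degree b = 3 → False)
    {v u' x y : V} (hv : G.degree v = 3)
    (hvu : G.Adj v u') (hvx : G.Adj v x) (hvy : G.Adj v y)
    (hux : u' ≠ x) (huy : u' ≠ y) (hxy : x ≠ y)
    (hu5 : G.degree u' ≤ 5) :
    42 ≤ inVsum E v := by
  have hx7 : 7 ≤ G.degree x := hC1 hv hvu hvx hux hu5
  have hy7 : 7 ≤ G.degree y := hC1 hv hvu hvy huy hu5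
  have n1 := inB_nonneg (G := G) v
  have n2 := inT2_nonneg E v
  have n3 := inT2'_nonneg E v
  have n4 := inT3_nonneg E v
  have n5 := inT3'_nonneg E v
  have n6 := inT4_nonneg E v
  have n7 := inT4'_nonneg E v
  have r2 := rate_ge18 hx7
  have r3 := rate_ge18 hy7
  by_cases hu'5 : G.degree u' = 5
  · have hbase := inB_ge_triple (G := G) hv hvu hvx hvy hux huy hxy
    have r1 : rate (G.degree u') = 6 := by rw [hu'5]; exact rate_five
    unfold inVsum
    linarith
  · have hu4 : G.degree u' ≤ 4 := by omega
    have hbase := inB_ge_pair (G := G) hv hvx hvy hxy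
    set du : G.Dart := ⟨(v, u'), hvu⟩ with hdu
    set dx : G.Dart := ⟨(v, x), hvx⟩ with hdx
    set dy : G.Dart := ⟨(v, y), hvy⟩ with hdy
    have hdux : du ≠ dx := fun h => hux (congrArg (fun d : G.Dart => d.snd) h)
    have hduy : du ≠ dy := fun h => huy (congrArg (fun d : G.Dart => d.snd) h)
    by_cases hx8 : 8 ≤ G.degree x <;> by_cases hy8 : 8 ≤ G.degree y
    · -- both ≥ 8
      have rx := rate_of_ge8 hx8
      have ry := rate_of_ge8 hy8
      unfold inVsum; linarith
    · -- x ≥ 8, y = 7 : supplement from y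
      have hy7' : G.degree y = 7 := by omega
      have rx := rate_of_ge8 hx8
      rcases rotation3 E hδ hv (rfl : du.fst = v) (rfl : dy.fst = v) hduy with h | h
      · have hs := supplement_or1 E hδ hface htri @hC1 @hC2 hv hu4 hy7' hvu hvy h
        unfold inVsum; linarith
      · have hs := supplement_or2 E hδ hface htri @hC1 @hC2 hv hu4 hy7' hvu hvy h
        unfold inVsum; linarith
    · -- y ≥ 8, x = 7 : supplement from x
      have hx7' : G.degree x = 7 := by omega
      have ry := rate_of_ge8 hy8
      rcases rotation3 E hδ hv (rfl : du.fst = v) (rfl : dx.fst = v) hdux with h | h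
      · have hs := supplement_or1 E hδ hface htri @hC1 @hC2 hv hu4 hx7' hvu hvx h
        unfold inVsum; linarith
      · have hs := supplement_or2 E hδ hface htri @hC1 @hC2 hv hu4 hx7' hvu hvx h
        unfold inVsum; linarith
    · -- both exactly 7
      have hx7' : G.degree x = 7 := by omega
      have hy7' : G.degree y = 7 := by omega
      rcases rotation3 E hδ hv (rfl : du.fst = v) (rfl : dx.fst = v) hdux with h1 | h1
      · have hP := supplement_or1 E hδ hface htri @hC1 @hC2 hv hu4 hx7' hvu hvx h1
        rcases rotation3 E hδ hv (rfl : du.fst = v) (rfl : dy.fst = v) hduy with h2 | h2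
        · exact absurd (congrArg (fun d : G.Dart => d.snd) (h1.symm.trans h2)) hxy
        · have hP' := supplement_or2 E hδ hface htri @hC1 @hC2 hv hu4 hy7' hvu hvy h2
          unfold inVsum; linarith
      · have hP' := supplement_or2 E hδ hface htri @hC1 @hC2 hv hu4 hx7' hvu hvx h1
        rcases rotation3 E hδ hv (rfl : du.fst = v) (rfl : dy.fst = v) hduy with h2 | h2
        · have hP := supplement_or1 E hδ hface htri @hC1 @hC2 hv hu4 hy7' hvu hvy h2
          unfold inVsum; linarith
        · exact absurd (congrArg (fun d : G.Dart => d.snd)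
            (E.next.injective (h1.trans h2.symm))) hxy

lemma receipts (hδ : ∀ v, 3 ≤ G.degree v) (hface : ∀ d, 3 ≤ E.faceSize d)
    (htri : G.CliqueFree 3)
    (hC1 : ∀ {v a b : V}, G.degree v = 3 → G.Adj v a → G.Adj v b → a ≠ b →
      G.degree a ≤ 5 → 7 ≤ G.degree b)
    (hC2 : ∀ {u a b : V}, G.degree u ≤ 4 → G.Adj u a → G.Adj u b → a ≠ b →
      G.degree a = 3 → G.degree b = 3 → False)
    {v : V} (hv : G.degree v = 3) : 42 ≤ inVsum E v := by
  have hcard : (G.neighborFinset v).card = 3 := by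
    rw [card_neighborFinset_eq_degree]; exact hv
  obtain ⟨a, b, c, hab, hac, hbc, hN⟩ := Finset.card_eq_three.mp hcard
  have hva : G.Adj v a := by rw [← SimpleGraph.mem_neighborFinset, hN]; simp
  have hvb : G.Adj v b := by rw [← SimpleGraph.mem_neighborFinset, hN]; simp
  have hvc : G.Adj v c := by rw [← SimpleGraph.mem_neighborFinset, hN]; simp
  by_cases ha5 : G.degree a ≤ 5
  · exact receipts_caseB E hδ hface htri @hC1 @hC2 hv hva hvb hvc hab hac hbc ha5
  by_cases hb5 : G.degree b ≤ 5
  · exact receipts_caseB E hδ hface htri @hC1 @hC2 hv hvb hva hvc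
      (Ne.symm hab) hbc hac hb5
  by_cases hc5 : G.degree c ≤ 5
  · exact receipts_caseB E hδ hface htri @hC1 @hC2 hv hvc hva hvb
      (Ne.symm hac) (Ne.symm hbc) hab hc5
  · have hbase := inB_ge_triple (G := G) hv hva hvb hvc hab hac hbc
    have r1 := rate_ge14 (show 6 ≤ G.degree a by omega)
    have r2 := rate_ge14 (show 6 ≤ G.degree b by omega)
    have r3 := rate_ge14 (show 6 ≤ G.degree c by omega)
    have n2 := inT2_nonneg E v
    have n3 := inT2'_nonneg E v
    have n4 := inT3_nonneg E v
    have n5 := inT3'_nonneg E v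
    have n6 := inT4_nonneg E v
    have n7 := inT4'_nonneg E v
    unfold inVsum
    linarith

end Stmt16Final
section Stmt16Main

open Finset PlaneEmbedding

variable {V : Type} [Fintype V] [DecidableEq V] {G : SimpleGraph V} [DecidableRel G.Adj]
  (E : PlaneEmbedding G)

lemma sum_inVsum : ∑ v : V, inVsum E v =
    ∑ e : G.Dart, (amtB (G := G) e + amtT2 E e + amtT2' E e + amtT3 E e + amtT3' E e
      + amtT4 E e + amtT4' E e) := by
  have e1 : ∑ v : V, inB (G := G) v = ∑ e : G.Dart, amtB (G := G) e :=
    sum_rec (amtB (G := G)) (fun e => e.snd)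
  have e2 : ∑ v : V, inT2 E v = ∑ e : G.Dart, amtT2 E e :=
    sum_rec (amtT2 E) (fun e => (E.facePerm e).snd)
  have e3 : ∑ v : V, inT2' E v = ∑ e : G.Dart, amtT2' E e :=
    sum_rec (amtT2' E) (fun e => (E.facePerm e).snd)
  have e4 : ∑ v : V, inT3 E v = ∑ e : G.Dart, amtT3 E e :=
    sum_rec (amtT3 E) (fun e => (E.facePerm (E.facePerm e)).snd)
  have e5 : ∑ v : V, inT3' E v = ∑ e : G.Dart, amtT3' E e :=
    sum_rec (amtT3' E) (fun e => e.snd)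
  have e6 : ∑ v : V, inT4 E v = ∑ e : G.Dart, amtT4 E e :=
    sum_rec (amtT4 E) (fun e => e.fst)
  have e7 : ∑ v : V, inT4' E v = ∑ e : G.Dart, amtT4' E e :=
    sum_rec (amtT4' E) (fun e => e.fst)
  unfold inVsum
  rw [Finset.sum_add_distrib, Finset.sum_add_distrib, Finset.sum_add_distrib,
    Finset.sum_add_distrib, Finset.sum_add_distrib, Finset.sum_add_distrib,
    e1, e2, e3, e4, e5, e6, e7,
    ← Finset.sum_add_distrib, ← Finset.sum_add_distrib, ← Finset.sum_add_distrib,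
    ← Finset.sum_add_distrib, ← Finset.sum_add_distrib, ← Finset.sum_add_distrib]

lemma sum_outVsum : ∑ w : V, outVsum E w =
    ∑ e : G.Dart, (amtB (G := G) e + amtT2 E e + amtT2' E e + amtT3 E e + amtT3' E e) := by
  have h : ∑ w : V, outVsum E w = ∑ e : G.Dart, payV E e :=
    sum_rec (payV E) (fun e => e.fst)
  rw [h]
  rfl

end Stmt16Main

/-- A triangle-free normal plane map has a (5⁻,3,6⁻)-path or a (3,4⁻,3)-path. -/
theorem stmt_16 {V : Type} [Fintype V] [DecidableEq V] (G : SimpleGraph V)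
    [DecidableRel G.Adj]
    (hconn : G.Connected)
    (hδ : ∀ v, 3 ≤ G.degree v)
    (E : PlaneEmbedding G) (hE : E.EulerFormula)
    (hface : ∀ d : G.Dart, 3 ≤ E.faceSize d)
    (htri : G.CliqueFree 3) :
    (∃ v₁ v₂ v₃ : V, G.Adj v₁ v₂ ∧ G.Adj v₂ v₃ ∧ v₁ ≠ v₃ ∧
        G.degree v₁ ≤ 5 ∧ G.degree v₂ = 3 ∧ G.degree v₃ ≤ 6) ∨
    (∃ v₁ v₂ v₃ : V, G.Adj v₁ v₂ ∧ G.Adj v₂ v₃ ∧ v₁ ≠ v₃ ∧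
        G.degree v₁ = 3 ∧ G.degree v₂ ≤ 4 ∧ G.degree v₃ = 3) := by
  by_contra hcon
  push_neg at hcon
  obtain ⟨h1, h2⟩ := hcon
  have hC1 : ∀ {v a b : V}, G.degree v = 3 → G.Adj v a → G.Adj v b → a ≠ b →
      G.degree a ≤ 5 → 7 ≤ G.degree b := by
    intro v a b hv hva hvb hab ha5
    have := h1 a v b hva.symm hvb hab ha5 hv
    omega
  have hC2 : ∀ {u a b : V}, G.degree u ≤ 4 → G.Adj u a → G.Adj u b → a ≠ b →
      G.degree a = 3 → G.degree b = 3 → False := by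
    intro u a b hu hua hub hab ha hb
    exact absurd hb (h2 a u b hua.symm hub hab ha hu)
  -- pointwise bounds
  have hVpt : ∀ v : V, 0 ≤ 42 * ((G.degree v : ℤ) - 4) - outVsum E v + inVsum E v := by
    intro v
    have haud := outVsum_le E hδ hface v
    by_cases hv3 : G.degree v = 3
    · have hrec := receipts E hδ hface htri @hC1 @hC2 hv3
      rw [if_pos hv3] at haud
      rw [hv3] at haud ⊢
      push_cast at haud ⊢
      linarith
    · rw [if_neg hv3] at haud
      have := inVsum_nonneg E v
      linarith
  have hFpt : ∀ q : Quotient E.faceSetoid,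
      0 ≤ 42 * ((fSize E q : ℤ) - 4) - outF E q := by
    intro q
    have := outF_le E htri hface q
    linarith
  have hsumpos : 0 ≤ ∑ v : V, (42 * ((G.degree v : ℤ) - 4) - outVsum E v + inVsum E v)
      + ∑ q : Quotient E.faceSetoid, (42 * ((fSize E q : ℤ) - 4) - outF E q) :=
    add_nonneg (Finset.sum_nonneg fun v _ => hVpt v) (Finset.sum_nonneg fun q _ => hFpt q)
  -- transfers cancel
  have hinout : ∑ v : V, inVsum E v = (∑ w : V, outVsum E w) +
      ∑ q : Quotient E.faceSetoid, outF E q := by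
    rw [sum_inVsum, sum_outVsum, sum_outF, ← Finset.sum_add_distrib]
    exact Finset.sum_congr rfl fun e _ => by ring
  -- Euler bookkeeping
  have hdeg : (∑ v : V, (G.degree v : ℤ)) = (Fintype.card G.Dart : ℤ) := by
    rw [SimpleGraph.dart_card_eq_sum_degrees]
    push_cast
    rfl
  have hfs : (∑ q : Quotient E.faceSetoid, (fSize E q : ℤ)) = (Fintype.card G.Dart : ℤ) := by
    rw [← sum_fSize E]
    push_cast
    rfl
  have hdartedges : (Fintype.card G.Dart : ℤ) = 2 * (G.edgeFinset.card : ℤ) := by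
    rw [SimpleGraph.dart_card_eq_twice_card_edges]
    push_cast
    ring
  have hEF : (Fintype.card V : ℤ) - (G.edgeFinset.card : ℤ)
      + (Fintype.card (Quotient E.faceSetoid) : ℤ) = 2 := by
    have hh := hE
    unfold PlaneEmbedding.EulerFormula at hh
    have hv' : (Nat.card V : ℤ) = (Fintype.card V : ℤ) := by
      rw [Nat.card_eq_fintype_card]
    have he' : (Nat.card G.edgeSet : ℤ) = (G.edgeFinset.card : ℤ) := by
      rw [Nat.card_eq_fintype_card, SimpleGraph.edgeFinset_card]
    have hf' : (E.faceCount : ℤ) = (Fintype.card (Quotient E.faceSetoid) : ℤ) := by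
      unfold PlaneEmbedding.faceCount
      rw [Nat.card_eq_fintype_card]
    rw [hv', he', hf'] at hh
    exact hh
  have hsumdeg : ∑ v : V, (42 * ((G.degree v : ℤ) - 4)) =
      42 * (Fintype.card G.Dart : ℤ) - 168 * (Fintype.card V : ℤ) := by
    have h0 : ∀ v : V, 42 * ((G.degree v : ℤ) - 4) = 42 * (G.degree v : ℤ) - 168 :=
      fun v => by ring
    rw [Finset.sum_congr rfl (fun v _ => h0 v), Finset.sum_sub_distrib,
      ← Finset.mul_sum, hdeg, Finset.sum_const, Finset.card_univ, nsmul_eq_mul]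
    ring
  have hsumfs : ∑ q : Quotient E.faceSetoid, (42 * ((fSize E q : ℤ) - 4)) =
      42 * (Fintype.card G.Dart : ℤ)
        - 168 * (Fintype.card (Quotient E.faceSetoid) : ℤ) := by
    have h0 : ∀ q : Quotient E.faceSetoid,
        42 * ((fSize E q : ℤ) - 4) = 42 * (fSize E q : ℤ) - 168 := fun q => by ring
    rw [Finset.sum_congr rfl (fun q _ => h0 q), Finset.sum_sub_distrib,
      ← Finset.mul_sum, hfs, Finset.sum_const, Finset.card_univ, nsmul_eq_mul]
    ring
  -- total is -336
  have htotal : ∑ v : V, (42 * ((G.degree v : ℤ) - 4) - outVsum E v + inVsum E v)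
      + ∑ q : Quotient E.faceSetoid, (42 * ((fSize E q : ℤ) - 4) - outF E q) = -336 := by
    rw [Finset.sum_add_distrib, Finset.sum_sub_distrib, Finset.sum_sub_distrib]
    rw [hsumdeg, hsumfs]
    have := hinout
    linarith
  rw [htotal] at hsumpos
  norm_num at hsumpos
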